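/- Local norms bound for negative entropy: let y, y' ∈ Δᵐ and δ ∈ ℝᵐ with δ_i ≤ 1.79 for all i. Then ⟨δ, y' − y⟩ − KL(y' ‖ y) ≤ ∑_{i∈[m]} y_i δ_i², where KL(y' ‖ y) = ∑_i y'_i log(y'_i/y_i) is the Bregman divergence of negative entropy. -/

import Mathlib

open Real Set

private noncomputable def gFun : ℝ → ℝ := fun x => 1 + x + x ^ 2 - Real.exp x

private lemma gFun_hasDeriv (x : ℝ) : HasDerivAt gFun (1 + 2 * x - Real.exp x) x := by
  have h : HasDerivAt (fun x : ℝ => 1 + x + x ^ 2 - Real.exp x)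
      (0 + 1 + (2 : ℕ) * x ^ (2 - 1) - Real.exp x) x :=
    (((hasDerivAt_const x (1:ℝ)).add (hasDerivAt_id x)).add (hasDerivAt_pow 2 x)).sub
      (Real.hasDerivAt_exp x)
  convert h using 1
  · rfl
  · norm_num

private lemma gFun_deriv : deriv gFun = fun x => 1 + 2 * x - Real.exp x := by
  funext x; exact (gFun_hasDeriv x).deriv

private lemma gFun_deriv2 (x : ℝ) : deriv (deriv gFun) x = 2 - Real.exp x := by
  rw [gFun_deriv]
  have h : HasDerivAt (fun x : ℝ => 1 + 2 * x - Real.exp x) (2 - Real.exp x) x := by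
    have := (((hasDerivAt_id x).const_mul (2:ℝ)).const_add (1:ℝ)).sub (Real.hasDerivAt_exp x)
    exact this.congr_deriv (by ring)
  exact h.deriv

private lemma exp_le_one_add_two_mul {x : ℝ} (h0 : 0 ≤ x) (h1 : x ≤ 3/4) :
    Real.exp x ≤ 1 + 2 * x := by
  have hc : (0:ℝ) < 1 - x/3 := by linarith
  have h2 : 1 - x/3 ≤ Real.exp (-(x/3)) := by
    have := Real.add_one_le_exp (-(x/3)); linarith
  have h3 : (1 - x/3)^3 ≤ Real.exp (-(x/3))^3 := by
    apply pow_le_pow_left₀ hc.le h2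
  have h4 : Real.exp (-(x/3))^3 = Real.exp (-x) := by
    rw [← Real.exp_nat_mul]; congr 1; push_cast; ring
  have h5 : Real.exp x * (1 - x/3)^3 ≤ 1 := by
    rw [h4] at h3
    calc Real.exp x * (1 - x/3)^3 ≤ Real.exp x * Real.exp (-x) :=
          mul_le_mul_of_nonneg_left h3 (Real.exp_pos x).le
      _ = 1 := by rw [← Real.exp_add]; simp
  have h6 : (1:ℝ) ≤ (1 + 2*x) * (1 - x/3)^3 := by
    nlinarith [mul_nonneg h0 (sq_nonneg (x - 3/4)),
      mul_nonneg (mul_nonneg h0 h0) (sub_nonneg.2 h1),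
      mul_nonneg h0 (mul_nonneg (mul_nonneg h0 h0) (sub_nonneg.2 h1)),
      mul_nonneg h0 (sub_nonneg.2 h1), sq_nonneg (x - 3/4), mul_nonneg h0 h0]
  have h7 : Real.exp x * (1 - x/3)^3 ≤ (1 + 2*x) * (1 - x/3)^3 := le_trans h5 h6
  exact le_of_mul_le_mul_right h7 (by positivity)

private lemma two_le_exp {x : ℝ} (h : 3/4 ≤ x) : 2 ≤ Real.exp x := by
  have h0 : (0:ℝ) ≤ x := by linarith
  have := Real.quadratic_le_exp_of_nonneg h0
  nlinarith

private lemma exp_179_le : Real.exp 1.79 ≤ 1 + 1.79 + 1.79 ^ 2 := by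
  have h : Real.exp 0.895 ≤ (∑ m ∈ Finset.range 7, (0.895:ℝ) ^ m / m.factorial) +
      (0.895:ℝ) ^ 7 * (7 + 1) / (Nat.factorial 7 * 7) :=
    Real.exp_bound' (by norm_num) (by norm_num) (by norm_num)
  have hB : Real.exp 0.895 ≤ 2.4474 := by
    refine h.trans ?_
    simp [Finset.sum_range_succ, Nat.factorial]
    norm_num
  have h2 : Real.exp 1.79 = Real.exp 0.895 * Real.exp 0.895 := by
    rw [← Real.exp_add]; norm_num
  rw [h2]
  calc Real.exp 0.895 * Real.exp 0.895 ≤ 2.4474 * 2.4474 := by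
        exact mul_le_mul hB hB (Real.exp_pos _).le (by norm_num)
    _ ≤ 1 + 1.79 + 1.79 ^ 2 := by norm_num

private lemma exp_le_quad {x : ℝ} (hx : x ≤ 1.79) : Real.exp x ≤ 1 + x + x ^ 2 := by
  rcases le_or_gt x 0 with h0 | h0
  · -- exp x (1-x) ≤ 1, (1+x+x^2)(1-x) = 1 - x^3 ≥ 1
    have h1 : 1 - x ≤ Real.exp (-x) := by have := Real.add_one_le_exp (-x); linarith
    have h2 : Real.exp x * (1 - x) ≤ 1 := by
      calc Real.exp x * (1 - x) ≤ Real.exp x * Real.exp (-x) :=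
            mul_le_mul_of_nonneg_left h1 (Real.exp_pos x).le
        _ = 1 := by rw [← Real.exp_add]; simp
    nlinarith [Real.exp_pos x, sq_nonneg x]
  · -- 0 < x ≤ 1.79
    have key : ∀ z ∈ Icc (0:ℝ) 1.79, 0 ≤ gFun z := by
      intro z hz
      obtain ⟨hz0, hz1⟩ := hz
      have hmono : MonotoneOn gFun (Icc (0:ℝ) (3/4)) := by
        apply monotoneOn_of_deriv_nonneg (convex_Icc _ _)
        · exact (continuous_const.add continuous_id |>.add (continuous_pow 2) |>.sub
            Real.continuous_exp).continuousOn
        · intro t _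
          exact (gFun_hasDeriv t).differentiableAt.differentiableWithinAt
        · intro t ht
          rw [interior_Icc] at ht
          have hd : deriv gFun t = 1 + 2 * t - Real.exp t := (gFun_hasDeriv t).deriv
          rw [hd]
          have := exp_le_one_add_two_mul ht.1.le ht.2.le
          linarith
      have hg0 : gFun 0 = 0 := by simp [gFun]
      have hg34 : 0 ≤ gFun (3/4) := by
        have := hmono (left_mem_Icc.2 (by norm_num)) (right_mem_Icc.2 (by norm_num)) (by norm_num)
        rw [hg0] at this; exact this
      rcases le_or_gt z (3/4) with hz34 | hz34
      · have := hmono (left_mem_Icc.2 (by norm_num)) ⟨hz0, hz34⟩ hz0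
        rw [hg0] at this; exact this
      · have hconc : ConcaveOn ℝ (Icc (3/4 : ℝ) 1.79) gFun := by
          apply concaveOn_of_deriv2_nonpos (convex_Icc _ _)
          · exact (continuous_const.add continuous_id |>.add (continuous_pow 2) |>.sub
              Real.continuous_exp).continuousOn
          · intro t _
            exact (gFun_hasDeriv t).differentiableAt.differentiableWithinAt
          · rw [gFun_deriv]
            exact (Differentiable.differentiableOn (by fun_prop))
          · intro t ht
            rw [interior_Icc] at ht
            have : deriv^[2] gFun t = 2 - Real.exp t := by
              simp [Function.iterate_succ, gFun_deriv2]
            rw [this]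
            have := two_le_exp (le_of_lt ht.1)
            linarith
        have hg179 : 0 ≤ gFun 1.79 := by
          have := exp_179_le
          simp only [gFun]; linarith
        have hzseg : z ∈ segment ℝ (3/4 : ℝ) 1.79 := by
          rw [segment_eq_Icc (by norm_num)]
          exact ⟨hz34.le, hz1⟩
        have := hconc.ge_on_segment (left_mem_Icc.2 (by norm_num))
          (right_mem_Icc.2 (by norm_num)) hzseg
        have hmin : (0:ℝ) ≤ min (gFun (3/4)) (gFun 1.79) := le_min hg34 hg179
        linarith
    have := key x ⟨h0.le, hx⟩
    simp only [gFun] at this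
    linarith

/-- local-norms bound for negative entropy: for `y, y'` in the
simplex (with `y` strictly positive, where the KL divergence is finite) and
`δ` with `δᵢ ≤ 1.79` for all `i`,
`⟨δ, y' − y⟩ − KL(y'‖y) ≤ ∑ᵢ yᵢ δᵢ²`. -/
theorem entropy_local_norms {m : ℕ}
    (y y' : Fin m → ℝ)
    (hy : (∀ i, 0 ≤ y i) ∧ ∑ i, y i = 1)
    (hy' : (∀ i, 0 ≤ y' i) ∧ ∑ i, y' i = 1)
    (hypos : ∀ i, 0 < y i)
    (δ : Fin m → ℝ) (hδ : ∀ i, δ i ≤ 1.79) :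
    ∑ i, δ i * (y' i - y i) - ∑ i, y' i * Real.log (y' i / y i) ≤
      ∑ i, y i * δ i ^ 2 := by
  have key : ∀ i, δ i * y' i - y' i * Real.log (y' i / y i) ≤
      y i * (1 + δ i + δ i ^ 2) - y' i := by
    intro i
    have hexp : Real.exp (δ i) ≤ 1 + δ i + δ i ^ 2 := exp_le_quad (hδ i)
    have hbound : y i * Real.exp (δ i) ≤ y i * (1 + δ i + δ i ^ 2) :=
      mul_le_mul_of_nonneg_left hexp (hypos i).le
    rcases eq_or_lt_of_le (hy'.1 i) with h | h
    · rw [← h]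
      have h1 : (0:ℝ) ≤ 1 + δ i + δ i ^ 2 := by nlinarith [sq_nonneg (δ i + 1/2)]
      have := mul_nonneg (hypos i).le h1
      simp only [mul_zero, zero_mul, sub_zero]
      linarith
    · have hpos : (0:ℝ) < y i * Real.exp (δ i) / y' i := div_pos (mul_pos (hypos i) (Real.exp_pos _)) h
      have hlog : Real.log (y i * Real.exp (δ i) / y' i) ≤
          y i * Real.exp (δ i) / y' i - 1 := Real.log_le_sub_one_of_pos hpos
      have hlogeq : Real.log (y i * Real.exp (δ i) / y' i) =
          Real.log (y i) + δ i - Real.log (y' i) := by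
        rw [Real.log_div (mul_pos (hypos i) (Real.exp_pos _)).ne' h.ne', Real.log_mul (hypos i).ne'
          (Real.exp_ne_zero _), Real.log_exp]
      rw [hlogeq] at hlog
      have h3 := mul_le_mul_of_nonneg_left hlog h.le
      have h4 : y' i * (y i * Real.exp (δ i) / y' i - 1) =
          y i * Real.exp (δ i) - y' i := by field_simp
      rw [h4] at h3
      have hlogratio : Real.log (y' i / y i) = Real.log (y' i) - Real.log (y i) :=
        Real.log_div h.ne' (hypos i).ne'
      rw [hlogratio]
      have h5 : δ i * y' i - y' i * (Real.log (y' i) - Real.log (y i)) =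
          y' i * (Real.log (y i) + δ i - Real.log (y' i)) := by ring
      linarith
  have hsum : ∑ i, (δ i * y' i - y' i * Real.log (y' i / y i)) ≤
      ∑ i, (y i * (1 + δ i + δ i ^ 2) - y' i) :=
    Finset.sum_le_sum fun i _ => key i
  have e1 : ∑ i, δ i * (y' i - y i) = ∑ i, δ i * y' i - ∑ i, δ i * y i := by
    rw [← Finset.sum_sub_distrib]
    exact Finset.sum_congr rfl fun i _ => by ring
  have e2 : ∑ i, (δ i * y' i - y' i * Real.log (y' i / y i)) =
      ∑ i, δ i * y' i - ∑ i, y' i * Real.log (y' i / y i) :=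
    Finset.sum_sub_distrib _ _
  have e3 : ∑ i, (y i * (1 + δ i + δ i ^ 2) - y' i) =
      (∑ i, y i + ∑ i, y i * δ i + ∑ i, y i * δ i ^ 2) - ∑ i, y' i := by
    rw [Finset.sum_sub_distrib, ← Finset.sum_add_distrib, ← Finset.sum_add_distrib]
    congr 1
    exact Finset.sum_congr rfl fun i _ => by ring
  have e4 : ∑ i, δ i * y i = ∑ i, y i * δ i :=
    Finset.sum_congr rfl fun i _ => mul_comm _ _
  rw [e2, e3] at hsum
  rw [e1, e4]
  linarith [hy.2, hy'.2]
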